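/- Let P, N₁, N₂, N₃ be positive reals with N₁ ≤ N₂ ≤ N₃ ≤ P/3, and let α₂ ∈ [0,1] with α₂·P ≥ N₃. Set α₀ = N₂/P and c₁₁ = (1−α₀)/(2−α₀). Then (1/2)·log(c₁₁ + (P−N₂)/(α₂P+2N₂)) > (1/2)·log(P/(3·α₂·P)). -/
import Mathlib


theorem type1_gap_case1 (P N₁ N₂ N₃ α₂ : ℝ)
    (hN₁ : 0 < N₁) (h12 : N₁ ≤ N₂) (h23 : N₂ ≤ N₃) (h3P : N₃ ≤ P / 3)
    (hP : 0 < P) (hα₂0 : 0 ≤ α₂) (hα₂1 : α₂ ≤ 1) (hα₂P : α₂ * P ≥ N₃) :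
    (1/2) * Real.logb 2 ((1 - N₂/P) / (2 - N₂/P) + (P - N₂) / (α₂ * P + 2 * N₂))
      > (1/2) * Real.logb 2 (P / (3 * α₂ * P)) := by
  have hN₂ : 0 < N₂ := lt_of_lt_of_le hN₁ h12
  have hN₃ : 0 < N₃ := lt_of_lt_of_le hN₂ h23
  have hα₂ : 0 < α₂ := by
    rcases lt_or_eq_of_le hα₂0 with h | h
    · exact h
    · exfalso; rw [← h] at hα₂P; simp at hα₂P; linarith
  have hN₂P : N₂ ≤ P / 3 := le_trans h23 h3P
  have hN₂α : N₂ ≤ α₂ * P := le_trans h23 hα₂P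
  have hd1 : 0 < 2 - N₂/P := by
    have : N₂/P ≤ 1/3 := by rw [div_le_div_iff₀ hP (by norm_num)]; linarith
    linarith
  have hd2 : 0 < α₂ * P + 2 * N₂ := by positivity
  have hrw : (1 - N₂/P) / (2 - N₂/P) = (P - N₂) / (2 * P - N₂) := by
    rw [div_eq_div_iff (ne_of_gt hd1) (by linarith : (2 * P - N₂) ≠ 0)]
    field_simp
  have hrw2 : P / (3 * α₂ * P) = 1 / (3 * α₂) := by
    rw [div_eq_div_iff (by positivity : (3 * α₂ * P) ≠ 0) (by positivity : (3 * α₂ : ℝ) ≠ 0)]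
    ring
  rw [hrw, hrw2]
  have key : 1 / (3 * α₂) < (P - N₂) / (2 * P - N₂) + (P - N₂) / (α₂ * P + 2 * N₂) := by
    rw [div_add_div _ _ (by linarith : (2 * P - N₂) ≠ 0) (ne_of_gt hd2),
      div_lt_div_iff₀ (by positivity) (by nlinarith : (0:ℝ) < (2 * P - N₂) * (α₂ * P + 2 * N₂))]
    nlinarith [mul_pos hα₂ hP, mul_pos hN₂ hα₂, mul_pos (mul_pos hα₂ hP) hP,
      mul_nonneg (sub_nonneg.2 hN₂α) (le_of_lt hN₂),
      mul_nonneg (sub_nonneg.2 hN₂α) (le_of_lt (mul_pos hα₂ hP)),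
      mul_nonneg (sub_nonneg.2 hN₂α) (by linarith : (0:ℝ) ≤ P - 3 * N₂),
      mul_nonneg (mul_nonneg hα₂0 hP.le) (by linarith : (0:ℝ) ≤ P - 3 * N₂),
      mul_nonneg hN₂.le (by linarith : (0:ℝ) ≤ P - 3 * N₂)]
  have hpos : 0 < 1 / (3 * α₂) := by positivity
  have := Real.logb_lt_logb (by norm_num : (1:ℝ) < 2) hpos key
  linarith
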